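/- For all filters F and G on the n-element antichain and every k ≥ 0, the commutator N_F ∘ N_G − N_G ∘ N_F maps Φ_T^{≤k} into Φ_T^{≤k−1} (with the convention Φ_T^{≤−1} = {0}); that is, the operators N_F commute with each other on the associated graded space ⊕_k Φ_T^{≤k}/Φ_T^{≤k−1}. -/

import Mathlib

/-- The set of unordered pairs `{i,j}`, `i < j`, of elements of `{1,…,n}`;
it has `m = n(n-1)/2` elements. -/
abbrev TPairs (n : ℕ) := {p : Fin n × Fin n // p.1 < p.2}

/-- A tournament on `{1,…,n}`: an independent choice of one of the two strict orders for
each pair `i < j` (`T p = true` means `p.1 ≺ p.2`).  Tournaments are identified with the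
vertices `{-1,+1}^m` of the cube, `true ↦ +1`, `false ↦ -1`. -/
abbrev Tournament (n : ℕ) := TPairs n → Bool

/-- The tournament `≺_F`: `i ≺_F j` iff `F i < F j`, or `F i = F j` and `i ≺ j`. -/
def tAct {n k : ℕ} (F : Fin n → Fin k) (T : Tournament n) : Tournament n :=
  fun p => if F p.1.1 < F p.1.2 then true else if F p.1.2 < F p.1.1 then false else T p

/-- `Φ_T^{≤k}`: the space of real-valued functions on tournaments which are restrictions
to the vertices `{-1,+1}^m` of the cube of polynomials of total degree at most `k`. -/
def PhiLe (n k : ℕ) : Set (Tournament n → ℝ) :=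
  {f | ∃ q : MvPolynomial (TPairs n) ℝ, q.totalDegree ≤ k ∧
    ∀ T : Tournament n, f T = MvPolynomial.eval (fun p => if T p then (1 : ℝ) else -1) q}

/-- The commutator `N_F ∘ N_G − N_G ∘ N_F` (where `(N_F f)(≺) = f(≺_F)`) maps `Φ_T^{≤k}`
into `Φ_T^{≤k-1}` (with `Φ_T^{≤-1} = {0}`): the operators `N_F` commute on the associated
graded space. -/
lemma tAct_eval_pt {n kF kG : ℕ} (F : Fin n → Fin kF) (G : Fin n → Fin kG)
    (T : Tournament n) (p : TPairs n) :
    (if (tAct G (tAct F T)) p then (1:ℝ) else -1)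
      = if (F p.1.1 = F p.1.2 ∧ G p.1.1 = G p.1.2) then (if T p then (1:ℝ) else -1)
        else (if G p.1.1 < G p.1.2 then 1 else if G p.1.2 < G p.1.1 then -1
              else if F p.1.1 < F p.1.2 then 1 else -1) := by
  simp only [tAct]
  rcases lt_trichotomy (G p.1.1) (G p.1.2) with h | h | h <;>
    rcases lt_trichotomy (F p.1.1) (F p.1.2) with h' | h' | h' <;>
      { simp only [h, h']; split_ifs <;> simp_all }

open MvPolynomial Finset in
theorem NF_commute_on_graded (n : ℕ) {kF kG : ℕ} (F : Fin n → Fin kF) (G : Fin n → Fin kG)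
    (hF : Function.Surjective F) (hG : Function.Surjective G)
    (k : ℕ) (f : Tournament n → ℝ) (hf : f ∈ PhiLe n k) :
    (k = 0 → (fun T : Tournament n =>
        f (tAct G (tAct F T)) - f (tAct F (tAct G T))) = 0) ∧
    (1 ≤ k → (fun T : Tournament n =>
        f (tAct G (tAct F T)) - f (tAct F (tAct G T))) ∈ PhiLe n (k - 1)) := by
  classical
  obtain ⟨q, hq, hfq⟩ := hf
  set e : Tournament n → TPairs n → ℝ := fun T p => if T p then 1 else -1 with he
  set A : TPairs n → Prop := fun p => F p.1.1 = F p.1.2 ∧ G p.1.1 = G p.1.2 with hA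
  set c₁ : TPairs n → ℝ := fun p => if G p.1.1 < G p.1.2 then 1 else if G p.1.2 < G p.1.1 then -1
      else if F p.1.1 < F p.1.2 then 1 else -1 with hc₁
  set c₂ : TPairs n → ℝ := fun p => if F p.1.1 < F p.1.2 then 1 else if F p.1.2 < F p.1.1 then -1
      else if G p.1.1 < G p.1.2 then 1 else -1 with hc₂
  have h1 : ∀ (T : Tournament n) p, e (tAct G (tAct F T)) p = if A p then e T p else c₁ p :=
    fun T p => tAct_eval_pt F G T p
  have h2 : ∀ (T : Tournament n) p, e (tAct F (tAct G T)) p = if A p then e T p else c₂ p :=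
    fun T p => by
      have := tAct_eval_pt G F T p
      simp only [he, hA, hc₂]
      rw [this]
      by_cases hAp : F p.1.1 = F p.1.2 ∧ G p.1.1 = G p.1.2
      · rw [if_pos hAp, if_pos ⟨hAp.2, hAp.1⟩]
      · rw [if_neg hAp, if_neg (fun h => hAp ⟨h.2, h.1⟩)]
  set a : (TPairs n →₀ ℕ) → ℝ := fun d => coeff d q *
      (∏ p ∈ d.support.filter (fun p => ¬ A p), c₁ p ^ d p
        - ∏ p ∈ d.support.filter (fun p => ¬ A p), c₂ p ^ d p) with ha
  set Q : MvPolynomial (TPairs n) ℝ :=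
      ∑ d ∈ q.support, C (a d) * ∏ p ∈ d.support.filter A, X p ^ d p with hQ
  have heval : ∀ T : Tournament n,
      f (tAct G (tAct F T)) - f (tAct F (tAct G T)) = eval (e T) Q := by
    intro T
    rw [hfq, hfq]
    have e1 : (fun p => if (tAct G (tAct F T)) p then (1:ℝ) else -1) = e (tAct G (tAct F T)) := rfl
    have e2 : (fun p => if (tAct F (tAct G T)) p then (1:ℝ) else -1) = e (tAct F (tAct G T)) := rfl
    rw [e1, e2, eval_eq, eval_eq, hQ, map_sum, ← Finset.sum_sub_distrib]
    refine Finset.sum_congr rfl fun d hd => ?_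
    have hsplit1 : ∏ p ∈ d.support, (e (tAct G (tAct F T)) p) ^ d p
        = (∏ p ∈ d.support.filter A, (e T p) ^ d p) *
          (∏ p ∈ d.support.filter (fun p => ¬ A p), c₁ p ^ d p) := by
      rw [← Finset.prod_filter_mul_prod_filter_not d.support A]
      congr 1
      · exact Finset.prod_congr rfl fun p hp => by
          rw [h1 T p, if_pos (Finset.mem_filter.mp hp).2]
      · exact Finset.prod_congr rfl fun p hp => by
          rw [h1 T p, if_neg (Finset.mem_filter.mp hp).2]
    have hsplit2 : ∏ p ∈ d.support, (e (tAct F (tAct G T)) p) ^ d p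
        = (∏ p ∈ d.support.filter A, (e T p) ^ d p) *
          (∏ p ∈ d.support.filter (fun p => ¬ A p), c₂ p ^ d p) := by
      rw [← Finset.prod_filter_mul_prod_filter_not d.support A]
      congr 1
      · exact Finset.prod_congr rfl fun p hp => by
          rw [h2 T p, if_pos (Finset.mem_filter.mp hp).2]
      · exact Finset.prod_congr rfl fun p hp => by
          rw [h2 T p, if_neg (Finset.mem_filter.mp hp).2]
    rw [hsplit1, hsplit2]
    simp only [map_mul, eval_C, eval_pow, eval_X, map_prod]
    ring
  have hdeg : ∀ d ∈ q.support, a d ≠ 0 → (∑ p ∈ d.support.filter A, d p) + 1 ≤ k := by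
    intro d hd hne
    have hDne : (d.support.filter (fun p => ¬ A p)).Nonempty := by
      by_contra hcon
      rw [Finset.not_nonempty_iff_eq_empty] at hcon
      apply hne
      rw [ha]; simp [hcon]
    obtain ⟨p₀, hp₀⟩ := hDne
    have hp₀s : p₀ ∈ d.support := (Finset.mem_filter.mp hp₀).1
    have h1le : 1 ≤ d p₀ := Nat.one_le_iff_ne_zero.mpr (Finsupp.mem_support_iff.mp hp₀s)
    have hsum : (∑ p ∈ d.support.filter A, d p) + (∑ p ∈ d.support.filter (fun p => ¬ A p), d p)
        = ∑ p ∈ d.support, d p := Finset.sum_filter_add_sum_filter_not _ _ _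
    have hle : d p₀ ≤ ∑ p ∈ d.support.filter (fun p => ¬ A p), d p :=
      Finset.single_le_sum (fun i _ => Nat.zero_le _) hp₀
    have htot : ∑ p ∈ d.support, d p ≤ k := by
      have := MvPolynomial.le_totalDegree hd
      calc ∑ p ∈ d.support, d p = d.sum fun _ e => e := rfl
        _ ≤ q.totalDegree := this
        _ ≤ k := hq
    omega
  constructor
  · intro hk0
    have hQ0 : Q = 0 := by
      rw [hQ]
      refine Finset.sum_eq_zero fun d hd => ?_
      have : a d = 0 := by
        by_contra hne
        have := hdeg d hd hne
        omega
      rw [this]; simp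
    funext T
    rw [Pi.zero_apply]
    rw [heval T, hQ0, map_zero]
  · intro hk1
    refine ⟨Q, ?_, fun T => heval T⟩
    rw [hQ]
    refine MvPolynomial.totalDegree_finsetSum_le fun d hd => ?_
    by_cases hne : a d = 0
    · rw [hne]; simp
    · calc (C (a d) * ∏ p ∈ d.support.filter A, X p ^ d p).totalDegree
          ≤ (C (a d)).totalDegree + (∏ p ∈ d.support.filter A, X p ^ d p).totalDegree :=
            totalDegree_mul _ _
        _ ≤ 0 + ∑ p ∈ d.support.filter A, (X p ^ d p : MvPolynomial (TPairs n) ℝ).totalDegree := by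
            rw [totalDegree_C]
            exact Nat.add_le_add_left (totalDegree_finset_prod _ _) 0
        _ ≤ ∑ p ∈ d.support.filter A, d p := by
            rw [zero_add]
            exact Finset.sum_le_sum fun p _ => (totalDegree_X_pow _ _).le
        _ ≤ k - 1 := by have := hdeg d hd hne; omega
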